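/- Let Λ be a ring and I a two-sided ideal of Λ. The class of right Λ-modules M with M·I = 0 is closed under extensions (that is: whenever 0 → L → M → N → 0 is a short exact sequence of right Λ-modules with L·I = 0 and N·I = 0, also M·I = 0) if and only if I is idempotent, i.e. I·I = I. -/

import Mathlib

universe u

open MulOpposite

/-- For a ring `Λ`, a right `Λ`-module is a left `Λᵐᵒᵖ`-module; `M · I = 0` means every element
of the ideal `I ⊆ Λ` acts as zero on `M`. -/
def AnnihilatedBy (Λ : Type u) [Ring Λ] (I : Ideal Λ)
    (M : Type u) [AddCommGroup M] [Module Λᵐᵒᵖ M] : Prop :=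
  ∀ (m : M) (i : Λ), i ∈ I → op i • m = 0

/-- A two-sided ideal, viewed as a right submodule of `Λ`. -/
def oppSub (Λ : Type u) [Ring Λ] (I : Ideal Λ) (hI : ∀ i ∈ I, ∀ r : Λ, i * r ∈ I) :
    Submodule Λᵐᵒᵖ Λ where
  carrier := I
  add_mem' := fun ha hb => I.add_mem ha hb
  zero_mem' := I.zero_mem
  smul_mem' := fun r x hx => by
    show x * r.unop ∈ I
    exact hI x hx r.unop

theorem mem_oppSub (Λ : Type u) [Ring Λ] (I : Ideal Λ) (hI : ∀ i ∈ I, ∀ r : Λ, i * r ∈ I)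
    (x : Λ) : x ∈ oppSub Λ I hI ↔ x ∈ I := Iff.rfl

/-- For a two-sided ideal `I` of a ring `Λ`, the class of right `Λ`-modules annihilated by `I`
is closed under extensions (for every short exact sequence `0 → L → M → N → 0` with `L·I = 0`
and `N·I = 0` one has `M·I = 0`) if and only if `I` is idempotent, i.e. `I·I = I`. -/
theorem stmt6 (Λ : Type u) [Ring Λ] (I : Ideal Λ) (hI : ∀ i ∈ I, ∀ r : Λ, i * r ∈ I) :
    (∀ (L M N : Type u) [AddCommGroup L] [Module Λᵐᵒᵖ L] [AddCommGroup M] [Module Λᵐᵒᵖ M]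
      [AddCommGroup N] [Module Λᵐᵒᵖ N] (f : L →ₗ[Λᵐᵒᵖ] M) (g : M →ₗ[Λᵐᵒᵖ] N),
      Function.Injective f → Function.Surjective g → LinearMap.range f = LinearMap.ker g →
      AnnihilatedBy Λ I L → AnnihilatedBy Λ I N → AnnihilatedBy Λ I M)
    ↔ I * I = I := by
  constructor
  · intro h
    haveI : I.IsTwoSided := ⟨fun b ha => hI _ ha b⟩
    -- the two-sidedness of `I * I`
    have hII : ∀ i ∈ I * I, ∀ r : Λ, i * r ∈ I * I := by
      intro i hi r
      refine Submodule.mul_induction_on hi (fun a ha b hb => ?_) (fun x y hx hy => ?_)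
      · rw [mul_assoc]; exact Ideal.mul_mem_mul ha (hI b hb r)
      · rw [add_mul]; exact Ideal.add_mem _ hx hy
    set K : Submodule Λᵐᵒᵖ Λ := oppSub Λ (I * I) hII with hK
    set J : Submodule Λᵐᵒᵖ Λ := oppSub Λ I hI with hJ
    have hKJ : K ≤ J := fun x hx => Ideal.mul_le_left (I := I) hx
    set L : Submodule Λᵐᵒᵖ (Λ ⧸ K) := J.map K.mkQ with hL
    set g : (Λ ⧸ K) →ₗ[Λᵐᵒᵖ] (Λ ⧸ J) := Submodule.mapQ K J LinearMap.id hKJ with hg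
    have hgmk : ∀ y : Λ, g (K.mkQ y) = J.mkQ y := fun y => rfl
    have hsmulmk : ∀ (y i : Λ), op i • K.mkQ y = K.mkQ (y * i) := by
      intro y i
      rw [← op_smul_eq_mul, map_smul]
    have hgsurj : Function.Surjective g := by
      intro n
      obtain ⟨y, rfl⟩ := J.mkQ_surjective n
      exact ⟨K.mkQ y, hgmk y⟩
    have hrk : LinearMap.range L.subtype = LinearMap.ker g := by
      ext x
      obtain ⟨y, rfl⟩ := K.mkQ_surjective x
      rw [Submodule.range_subtype, LinearMap.mem_ker, hgmk]
      constructor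
      · rintro ⟨j, hj, hjy⟩
        have hmem : y ∈ J := by
          have hsub : j - y ∈ K := (Submodule.Quotient.eq K).mp hjy
          have hy : y = j - (j - y) := (sub_sub_cancel j y).symm
          rw [hy]; exact J.sub_mem hj (hKJ hsub)
        exact (Submodule.Quotient.mk_eq_zero J).mpr hmem
      · intro hy
        exact ⟨y, (Submodule.Quotient.mk_eq_zero J).mp hy, rfl⟩
    have hLann : AnnihilatedBy Λ I L := by
      rintro ⟨l, hl⟩ i hi
      obtain ⟨j, hj, rfl⟩ := hl
      apply Subtype.ext
      show op i • K.mkQ j = 0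
      rw [hsmulmk]
      exact (Submodule.Quotient.mk_eq_zero K).mpr (Ideal.mul_mem_mul hj hi)
    have hNann : AnnihilatedBy Λ I (Λ ⧸ J) := by
      intro n i hi
      obtain ⟨y, rfl⟩ := J.mkQ_surjective n
      have : op i • J.mkQ y = J.mkQ (y * i) := by rw [← op_smul_eq_mul, map_smul]
      rw [this]
      exact (Submodule.Quotient.mk_eq_zero J).mpr (I.mul_mem_left y hi)
    have hMann := h L (Λ ⧸ K) (Λ ⧸ J) L.subtype g Subtype.val_injective hgsurj hrk hLann hNann
    apply le_antisymm (Ideal.mul_le_left)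
    intro i hi
    have := hMann (K.mkQ 1) i hi
    rw [hsmulmk, one_mul] at this
    exact (Submodule.Quotient.mk_eq_zero K).mp this
  · intro h L M N _ _ _ _ _ _ f g hf hg hrange hL hN m i hi
    rw [← h] at hi
    refine Submodule.mul_induction_on hi (fun a ha b hb => ?_) (fun x y hx hy => ?_)
    · have hgam : g (op a • m) = 0 := by rw [map_smul]; rw [hN (g m) a ha]
      obtain ⟨l, hl⟩ := (hrange ▸ LinearMap.mem_ker.mpr hgam : op a • m ∈ LinearMap.range f)
      calc op (a * b) • m = op b • (op a • m) := by rw [op_mul, mul_smul]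
        _ = op b • f l := by rw [hl]
        _ = f (op b • l) := (map_smul f _ _).symm
        _ = 0 := by rw [hL l b hb, map_zero]
    · rw [op_add, add_smul, hx, hy, add_zero]
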